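/- Fix ω, B, Γ, σ², c > 0, ξ ∈ (0,1], gains g_i > 0 and peak powers P_max,i > 0 for i = 1, …, n, and let F(p) = (Σ_{i=1}^n ω·B·log₂(1 + p_i·g_i/(Γσ²))) / ((Σ_{i=1}^n p_i)/ξ + c) on the box ∏_{i=1}^n [0, P_max,i]. If p* maximizes F over the box and coordinate i satisfies 0 < p*_i < P_max,i, then p*_i = ω·B·ξ/(F(p*)·ln 2) − Γσ²/g_i. (Equation (15) of the paper: the optimal power allocation maximizing the user EE satisfies the energy-efficient water-filling formula in every interior coordinate.) -/

import Mathlib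

/-- Equation (15) of the paper: if `p*` maximizes the user EE
`F(p) = (Σ_i ω·B·log₂(1 + p_i·g_i/(Γσ²))) / ((Σ_i p_i)/ξ + c)` over the power box
`∏_i [0, Pmax_i]` and coordinate `i` is interior (`0 < p*_i < Pmax_i`), then
`p*_i = ω·B·ξ/(F(p*)·ln 2) − Γσ²/g_i` (energy-efficient water-filling). -/
theorem userEE_interior_maximizer_waterfilling
    (n : ℕ) (ω B Γ σ2 ξ c : ℝ)
    (hω : 0 < ω) (hB : 0 < B) (hΓ : 0 < Γ) (hσ2 : 0 < σ2)
    (hξ0 : 0 < ξ) (hξ1 : ξ ≤ 1) (hc : 0 < c)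
    (g Pmax : Fin n → ℝ) (hg : ∀ i, 0 < g i) (hPm : ∀ i, 0 < Pmax i)
    (F : (Fin n → ℝ) → ℝ)
    (hF : ∀ p : Fin n → ℝ,
      F p = (∑ i, ω * B * Real.logb 2 (1 + p i * g i / (Γ * σ2))) /
        ((∑ i, p i) / ξ + c))
    (pstar : Fin n → ℝ) (hbox : ∀ i, pstar i ∈ Set.Icc 0 (Pmax i))
    (hmax : ∀ p : Fin n → ℝ, (∀ i, p i ∈ Set.Icc 0 (Pmax i)) → F p ≤ F pstar)
    (i : Fin n) (h0 : 0 < pstar i) (h1 : pstar i < Pmax i) :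
    pstar i = ω * B * ξ / (F pstar * Real.log 2) - Γ * σ2 / g i := by
  have hK : (0:ℝ) < Γ * σ2 := mul_pos hΓ hσ2
  have hL : (0:ℝ) < Real.log 2 := Real.log_pos one_lt_two
  obtain ⟨K, hKdef⟩ : ∃ K, K = Γ * σ2 := ⟨_, rfl⟩
  rw [← hKdef] at hF hK ⊢
  obtain ⟨t0, ht0⟩ : ∃ t, t = pstar i := ⟨_, rfl⟩
  rw [← ht0] at h0 h1 ⊢
  obtain ⟨A, hA⟩ : ∃ A, A = ∑ j ∈ Finset.univ.erase i,
      ω * B * Real.logb 2 (1 + pstar j * g j / K) := ⟨_, rfl⟩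
  obtain ⟨S, hS⟩ : ∃ S, S = ∑ j ∈ Finset.univ.erase i, pstar j := ⟨_, rfl⟩
  set φ : ℝ → ℝ := fun t =>
    (ω * B * (Real.log (1 + t * g i / K) / Real.log 2) + A) / ((t + S) / ξ + c) with hφdef
  have hupd : ∀ t : ℝ, F (Function.update pstar i t) = φ t := by
    intro t
    rw [hF]
    have h1' : ∑ j, ω * B * Real.logb 2 (1 + Function.update pstar i t j * g j / K)
        = ω * B * Real.logb 2 (1 + t * g i / K) + A := by
      rw [hA, ← Finset.add_sum_erase _ _ (Finset.mem_univ i)]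
      congr 1
      · simp
      · exact Finset.sum_congr rfl fun j hj => by
          rw [Function.update_of_ne (Finset.ne_of_mem_erase hj)]
    have h2' : ∑ j, Function.update pstar i t j = t + S := by
      rw [hS, ← Finset.add_sum_erase _ _ (Finset.mem_univ i)]
      congr 1
      · simp
      · exact Finset.sum_congr rfl fun j hj => by
          rw [Function.update_of_ne (Finset.ne_of_mem_erase hj)]
    rw [h1', h2', hφdef]
    simp [Real.logb]
  have hFp : F pstar = φ t0 := by
    rw [← hupd t0, ht0, Function.update_eq_self]
  have hloc : IsLocalMax φ t0 := by
    filter_upwards [Ioo_mem_nhds h0 h1] with t ht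
    rw [← hupd t, ← hFp]
    refine hmax _ fun j => ?_
    by_cases hj : j = i
    · subst hj; rw [Function.update_self]
      exact ⟨ht.1.le, ht.2.le⟩
    · rw [Function.update_of_ne hj]; exact hbox j
  have hgi := hg i
  have hu0 : (0:ℝ) < 1 + t0 * g i / K := by
    have : 0 < t0 * g i / K := div_pos (mul_pos h0 hgi) hK
    linarith
  have hSnn : 0 ≤ S := hS ▸ Finset.sum_nonneg fun j _ => (hbox j).1
  have hD0 : (0:ℝ) < (t0 + S) / ξ + c := by
    have : 0 ≤ (t0 + S) / ξ := div_nonneg (by linarith) hξ0.le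
    linarith
  have hu : HasDerivAt (fun t : ℝ => 1 + t * g i / K) (g i / K) t0 := by
    simpa using (((hasDerivAt_id t0).mul_const (g i)).div_const K).const_add 1
  have hlog : HasDerivAt (fun t : ℝ => Real.log (1 + t * g i / K))
      ((1 + t0 * g i / K)⁻¹ * (g i / K)) t0 :=
    by have := (Real.hasDerivAt_log hu0.ne').comp t0 hu; exact this
  have hnum : HasDerivAt (fun t : ℝ => ω * B * (Real.log (1 + t * g i / K) / Real.log 2) + A)
      (ω * B * ((1 + t0 * g i / K)⁻¹ * (g i / K) / Real.log 2)) t0 :=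
    ((hlog.div_const _).const_mul _).add_const A
  have hden : HasDerivAt (fun t : ℝ => (t + S) / ξ + c) (1 / ξ) t0 := by
    simpa using (((hasDerivAt_id t0).add_const S).div_const ξ).add_const c
  have hφd : HasDerivAt φ
      ((ω * B * ((1 + t0 * g i / K)⁻¹ * (g i / K) / Real.log 2) * ((t0 + S) / ξ + c)
        - (ω * B * (Real.log (1 + t0 * g i / K) / Real.log 2) + A) * (1 / ξ)) /
        ((t0 + S) / ξ + c) ^ 2) t0 := hnum.div hden hD0.ne'
  have hderiv0 : deriv φ t0 = 0 := hloc.deriv_eq_zero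
  have hkey0 := hφd.deriv
  rw [hderiv0] at hkey0
  -- abbreviate
  obtain ⟨N0, hN0⟩ : ∃ N, N = ω * B * (Real.log (1 + t0 * g i / K) / Real.log 2) + A := ⟨_, rfl⟩
  obtain ⟨u0, hu0def⟩ : ∃ u, u = 1 + t0 * g i / K := ⟨_, rfl⟩
  rw [← hN0, ← hu0def] at hkey0
  have hu0' : 0 < u0 := hu0def ▸ hu0
  have hAnn : 0 ≤ A := by
    rw [hA]
    refine Finset.sum_nonneg fun j _ => ?_
    have h1 : (1:ℝ) ≤ 1 + pstar j * g j / K := by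
      have := div_nonneg (mul_nonneg (hbox j).1 (hg j).le) hK.le
      linarith
    have := Real.logb_nonneg one_lt_two h1
    positivity
  have hN0pos : 0 < N0 := by
    have hu1 : (1:ℝ) < u0 := by
      rw [hu0def]
      have : 0 < t0 * g i / K := div_pos (mul_pos h0 hgi) hK
      linarith
    have hlu : 0 < Real.log u0 := Real.log_pos hu1
    have : 0 < ω * B * (Real.log u0 / Real.log 2) := by positivity
    rw [hN0, ← hu0def]
    linarith
  have hX : ω * B * (u0⁻¹ * (g i / K) / Real.log 2) * ((t0 + S) / ξ + c) - N0 * (1 / ξ) = 0 := by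
    rcases div_eq_zero_iff.mp hkey0.symm with h | h
    · exact h
    · exact absurd h (by positivity)
  have hpoly : ω * B * g i * (t0 + S + c * ξ) = u0 * K * Real.log 2 * N0 := by
    have hu0ne := hu0'.ne'
    field_simp at hX
    have h2 : (ω * B * g i * (t0 + S + c * ξ)) * ξ = (u0 * K * Real.log 2 * N0) * ξ := by
      linear_combination ξ * hX
    exact mul_right_cancel₀ hξ0.ne' h2
  have hFval : F pstar = N0 / ((t0 + S) / ξ + c) := by
    rw [hFp, hN0]
  rw [hFval]
  have hne : N0 / ((t0 + S) / ξ + c) * Real.log 2 ≠ 0 := by positivity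
  rw [eq_sub_iff_add_eq, eq_div_iff hne]
  have huK : u0 * K = K + t0 * g i := by
    rw [hu0def]; field_simp
  field_simp
  linear_combination (-1) * hpoly - Real.log 2 * N0 * huK
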